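/- For every integer j ≥ 2, the binomial coefficient satisfies C(2^j − 1, 2^{j−1}) ≡ 3 (mod 4). -/

import Mathlib

open Finset

/-- For `0 < i < 2^m`, `i ≠ 2^(m-1)`, `m ≥ 2`: `4 ∣ C(2^m, i)`. -/
lemma four_dvd_choose_pow (m i : ℕ) (hm : 2 ≤ m) (hi0 : 0 < i) (hilt : i < 2 ^ m)
    (hne : i ≠ 2 ^ (m - 1)) : 4 ∣ Nat.choose (2 ^ m) i := by
  haveI : Fact (Nat.Prime 2) := ⟨Nat.prime_two⟩
  -- key identity : 2^m * C(2^m - 1, i - 1) = C(2^m, i) * i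
  have hkey : 2 ^ m * Nat.choose (2 ^ m - 1) (i - 1) = Nat.choose (2 ^ m) i * i := by
    have h1 : 1 ≤ 2 ^ m := Nat.one_le_two_pow
    have := Nat.add_one_mul_choose_eq (2 ^ m - 1) (i - 1)
    simpa only [Nat.succ_eq_add_one, Nat.sub_add_cancel h1, Nat.sub_add_cancel hi0] using this
  have hC : 0 < Nat.choose (2 ^ m) i := Nat.choose_pos hilt.le
  have hDne : Nat.choose (2 ^ m - 1) (i - 1) ≠ 0 := by
    have : i - 1 ≤ 2 ^ m - 1 := by omega
    exact (Nat.choose_pos this).ne'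
  -- valuation of i is at most m - 2
  have hvi : padicValNat 2 i ≤ m - 2 := by
    by_contra h
    push_neg at h
    have h' : m - 1 ≤ padicValNat 2 i := by omega
    have hdvd : 2 ^ (m - 1) ∣ i := dvd_trans (pow_dvd_pow 2 h') pow_padicValNat_dvd
    obtain ⟨c, hc⟩ := hdvd
    have hc1 : c = 1 := by
      have h2 : 2 ^ m = 2 ^ (m - 1) * 2 := by
        rw [← pow_succ]; congr 1; omega
      have hp : 0 < 2 ^ (m - 1) := Nat.pow_pos (by norm_num)
      nlinarith [hilt, hi0]
    exact hne (by rw [hc, hc1, mul_one])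
  -- valuation identity
  have hv : m + padicValNat 2 (Nat.choose (2 ^ m - 1) (i - 1))
      = padicValNat 2 (Nat.choose (2 ^ m) i) + padicValNat 2 i := by
    have := congrArg (padicValNat 2) hkey
    rwa [padicValNat.mul (by positivity) hDne, padicValNat.mul hC.ne' hi0.ne',
      padicValNat.prime_pow] at this
  have hv2 : 2 ≤ padicValNat 2 (Nat.choose (2 ^ m) i) := by omega
  calc (4 : ℕ) = 2 ^ 2 := by norm_num
    _ ∣ 2 ^ padicValNat 2 (Nat.choose (2 ^ m) i) := pow_dvd_pow 2 hv2
    _ ∣ Nat.choose (2 ^ m) i := pow_padicValNat_dvd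

lemma central_mod_eight (m : ℕ) (hm : 2 ≤ m) :
    (Nat.choose (2 ^ m) (2 ^ (m - 1)) : ZMod 8) = 6 := by
  induction m, hm using Nat.le_induction with
  | base => decide
  | succ m hm ih =>
    have hm1 : m + 1 - 1 = m := rfl
    rw [hm1]
    have hpow : 2 ^ (m + 1) = 2 ^ m + 2 ^ m := by ring
    rw [hpow, Nat.add_choose_eq, Finset.Nat.sum_antidiagonal_eq_sum_range_succ_mk]
    -- sum over range (2^m + 1) of C(2^m,i) * C(2^m, 2^m - i)
    push_cast
    set n := 2 ^ m with hn
    have hn2 : 2 ≤ n := by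
      calc 2 = 2 ^ 1 := rfl
      _ ≤ 2 ^ m := Nat.pow_le_pow_right (by norm_num) (by omega)
    have hhalf : 2 ^ (m - 1) < n := by
      rw [hn]; exact Nat.pow_lt_pow_right (by norm_num) (by omega)
    have hhalf0 : 0 < 2 ^ (m - 1) := Nat.pow_pos (by norm_num)
    -- the set of special indices
    set A : Finset ℕ := {0, 2 ^ (m - 1), n} with hA
    have hsub : A ⊆ Finset.range (n + 1) := by
      intro x hx
      simp only [hA, Finset.mem_insert, Finset.mem_singleton] at hx
      rcases hx with rfl | rfl | rfl <;> simp [Finset.mem_range] <;> omega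
    rw [← Finset.sum_sdiff hsub]
    have hrest : ∑ i ∈ Finset.range (n + 1) \ A,
        ((Nat.choose n i : ZMod 8) * (Nat.choose n (n - i) : ZMod 8)) = 0 := by
      apply Finset.sum_eq_zero
      intro i hi
      simp only [Finset.mem_sdiff, Finset.mem_range, hA, Finset.mem_insert,
        Finset.mem_singleton, not_or] at hi
      obtain ⟨hilt, hi0, hine, hinen⟩ := hi
      have h4 : 4 ∣ Nat.choose n i := by
        apply four_dvd_choose_pow m i hm (by omega) (by omega) hine
      have hsymm : Nat.choose n (n - i) = Nat.choose n i :=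
        Nat.choose_symm (by omega)
      rw [hsymm]
      obtain ⟨t, ht⟩ := h4
      rw [ht]
      push_cast
      have heq : (4 : ZMod 8) * t * ((4:ZMod 8) * t) = 8 * (2 * (t * t)) := by ring
      rw [heq, show (8 : ZMod 8) = 0 from by decide, zero_mul]
    rw [hrest, zero_add]
    have h0ne : (0 : ℕ) ≠ 2 ^ (m - 1) := by omega
    have h0nen : (0 : ℕ) ≠ n := by omega
    have hhne : 2 ^ (m - 1) ≠ n := by omega
    rw [hA]
    rw [Finset.sum_insert (by simp [h0ne, h0nen]),
      Finset.sum_insert (by simp [hhne]), Finset.sum_singleton]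
    have hs : n - 2 ^ (m - 1) = 2 ^ (m - 1) := by
      have : n = 2 ^ (m - 1) + 2 ^ (m - 1) := by
        rw [hn, ← two_mul, ← pow_succ']
        congr 1; omega
      omega
    simp only [Nat.choose_zero_right, Nat.choose_self, Nat.sub_zero, Nat.sub_self, hs]
    rw [ih]
    push_cast
    ring_nf
    decide

/-- For `j ≥ 2`, `C(2^j - 1, 2^(j-1)) ≡ 3 (mod 4)`. -/
theorem binom_two_pow_sub_one_mod_four (j : ℕ) (hj : 2 ≤ j) :
    Nat.choose (2 ^ j - 1) (2 ^ (j - 1)) ≡ 3 [MOD 4] := by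
  have hb : Nat.choose (2 ^ j) (2 ^ (j - 1)) ≡ 6 [MOD 8] := by
    rw [← ZMod.natCast_eq_natCast_iff]
    have := central_mod_eight j hj
    rw [this]; decide
  -- C(2^j, 2^(j-1)) = 2 * C(2^j - 1, 2^(j-1))
  have hhalf : 2 ^ (j - 1) < 2 ^ j := Nat.pow_lt_pow_right (by norm_num) (by omega)
  have hsum : 2 ^ j - 1 = (2 ^ (j-1) - 1) + 2 ^ (j - 1) := by
    have : 2 ^ j = 2 ^ (j - 1) + 2 ^ (j - 1) := by
      rw [← two_mul, ← pow_succ']; congr 1; omega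
    have h0 : 0 < 2 ^ (j - 1) := Nat.pow_pos (by norm_num)
    omega
  have hdouble : Nat.choose (2 ^ j) (2 ^ (j - 1))
      = 2 * Nat.choose (2 ^ j - 1) (2 ^ (j - 1)) := by
    have h0 : 0 < 2 ^ (j - 1) := Nat.pow_pos (by norm_num)
    obtain ⟨a, ha⟩ : ∃ a, 2 ^ j = a + 1 := ⟨2 ^ j - 1, by omega⟩
    obtain ⟨b, hbb⟩ : ∃ b, 2 ^ (j - 1) = b + 1 := ⟨2 ^ (j - 1) - 1, by omega⟩
    have hab : a = 2 * b + 1 := by omega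
    rw [ha, hbb]
    simp only [Nat.add_sub_cancel]
    rw [Nat.choose_succ_succ]
    have hsymm : Nat.choose a b = Nat.choose a (b + 1) := by
      rw [← Nat.choose_symm (show b ≤ a by omega)]
      congr 1
      omega
    simp only [Nat.succ_eq_add_one]
    omega
  rw [hdouble] at hb
  unfold Nat.ModEq at hb ⊢
  omega
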